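/- Let Y_t, for t ≥ 0, be a sequence of real numbers such that the sum of the negative terms over any block of length w equals P_neg ≤ 0 and the sum of positive terms equals -P_neg, with each Y_t ≥ v' where v' ≥ -r. Then the discounted sum δ·Σ_{t=0}^∞ (1-δ)^t Y_t is minimized (over rearrangements within blocks) when all negative payoff is received at the start of each block and all positive payoff at the end, and in that worst case, for δ ≤ 1/(r·w·q), the discounted sum is at least δ·P_neg ≥ -1/q. -/

import Mathlib

set_option maxHeartbeats 1000000


/-- the discounted sum of a blockwise sequence whose negative parts
sum to P_neg and positive parts to -P_neg per block is minimized by front-loading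
the negative payoff, and in the worst case is at least δ·P_neg ≥ -1/q. -/
theorem worst_case_block_discounting
    (w : ℕ) (hw : 1 ≤ w) (δ : ℝ) (hδ0 : 0 < δ) (hδ1 : δ < 1)
    (r q : ℝ) (hr : 0 < r) (hq : 0 < q)
    (Pneg : ℝ) (hPneg : Pneg ≤ 0) (hPr : |Pneg| ≤ r * w)
    (v' : ℝ) (hv'r : -r ≤ v')
    (Z : Fin w → ℝ) (hZv' : ∀ k, v' ≤ Z k)
    (hneg : ∑ k, min (Z k) 0 = Pneg)
    (hpos : ∑ k, max (Z k) 0 = -Pneg)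
    (Y : ℕ → ℝ) (hY : ∀ t : ℕ, Y t = Z ⟨t % w, Nat.mod_lt t hw⟩)
    (hδq : δ ≤ 1 / (r * w * q)) :
    δ * ∑' t : ℕ, (1 - δ) ^ t * Y t
        ≥ δ * (Pneg + (-Pneg) * (1 - δ) ^ (w - 1)) * (1 / (1 - (1 - δ) ^ w)) ∧
      δ * (Pneg + (-Pneg) * (1 - δ) ^ (w - 1)) * (1 / (1 - (1 - δ) ^ w)) ≥ δ * Pneg ∧
      δ * Pneg ≥ -(1 / q) := by
  have hwpos : 0 < w := hw
  haveI : NeZero w := ⟨Nat.pos_iff_ne_zero.mp hwpos⟩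
  set x : ℝ := 1 - δ with hx
  have hx0 : 0 ≤ x := by simp [hx]; linarith
  have hx1 : x < 1 := by simp [hx]; linarith
  have hxw1 : x ^ w < 1 := pow_lt_one₀ hx0 hx1 (Nat.pos_iff_ne_zero.mp hwpos)
  have hxw0 : 0 < 1 - x ^ w := by linarith
  -- the finite sum
  set S : ℝ := ∑ k : Fin w, x ^ (k : ℕ) * Z k with hS
  -- tsum evaluation
  have hsumg : Summable (fun j : ℕ => (x ^ w) ^ j) :=
    summable_geometric_of_lt_one (pow_nonneg hx0 w) hxw1
  have hGval : ∑' j : ℕ, (x ^ w) ^ j = (1 - x ^ w)⁻¹ :=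
    tsum_geometric_of_lt_one (pow_nonneg hx0 w) hxw1
  have hnf : Summable (fun j : ℕ => ‖(x ^ w) ^ j‖) := by
    simpa [abs_of_nonneg (pow_nonneg (pow_nonneg hx0 w) _)] using hsumg
  have hng : Summable (fun k : Fin w => ‖x ^ (k : ℕ) * Z k‖) := Summable.of_finite
  have hprodsum : Summable (fun p : ℕ × Fin w => (x ^ w) ^ p.1 * (x ^ (p.2 : ℕ) * Z p.2)) :=
    summable_mul_of_summable_norm hnf hng
  have hprodval : ∑' p : ℕ × Fin w, (x ^ w) ^ p.1 * (x ^ (p.2 : ℕ) * Z p.2)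
      = (1 - x ^ w)⁻¹ * S := by
    rw [← tsum_mul_tsum_of_summable_norm hnf hng, hGval, tsum_fintype]
  have hps : HasSum (fun p : ℕ × Fin w => (x ^ w) ^ p.1 * (x ^ (p.2 : ℕ) * Z p.2))
      ((1 - x ^ w)⁻¹ * S) := hprodval ▸ hprodsum.hasSum
  have hcomp := (Nat.divModEquiv w).hasSum_iff.mpr hps
  have hfun : ((fun p : ℕ × Fin w => (x ^ w) ^ p.1 * (x ^ (p.2 : ℕ) * Z p.2))
      ∘ (Nat.divModEquiv w)) = fun t : ℕ => x ^ t * Y t := by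
    funext t
    have hmod : ((Fin.ofNat w t : Fin w) : ℕ) = t % w := Fin.val_ofNat ..
    have hZeq : Z (Fin.ofNat w t) = Z ⟨t % w, Nat.mod_lt t hw⟩ := by
      exact congrArg Z (Fin.ext hmod)
    show (x ^ w) ^ (t / w) * (x ^ ((Fin.ofNat w t : Fin w) : ℕ) * Z (Fin.ofNat w t)) = x ^ t * Y t
    rw [hY t, ← hZeq, hmod, ← pow_mul, ← mul_assoc, ← pow_add]
    congr 2
    rw [Nat.add_comm]
    exact Nat.mod_add_div t w
  rw [hfun] at hcomp
  have htsum : ∑' t : ℕ, x ^ t * Y t = (1 - x ^ w)⁻¹ * S := hcomp.tsum_eq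
  -- lower bound on S
  have hSlb : S ≥ Pneg + (-Pneg) * x ^ (w - 1) := by
    have hsplit : S = (∑ k : Fin w, x ^ (k : ℕ) * min (Z k) 0)
        + ∑ k : Fin w, x ^ (k : ℕ) * max (Z k) 0 := by
      rw [hS, ← Finset.sum_add_distrib]
      apply Finset.sum_congr rfl
      intro k _
      rw [← mul_add, min_add_max, add_zero]
    have h1 : (∑ k : Fin w, x ^ (k : ℕ) * min (Z k) 0) ≥ ∑ k : Fin w, min (Z k) 0 := by
      apply Finset.sum_le_sum
      intro k _
      have : x ^ (k : ℕ) ≤ 1 := pow_le_one₀ hx0 (by linarith)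
      nlinarith [min_le_right (Z k) (0 : ℝ), pow_nonneg hx0 (k : ℕ)]
    have h2 : (∑ k : Fin w, x ^ (k : ℕ) * max (Z k) 0)
        ≥ ∑ k : Fin w, x ^ (w - 1) * max (Z k) 0 := by
      apply Finset.sum_le_sum
      intro k _
      have hk : (k : ℕ) ≤ w - 1 := by omega
      have : x ^ (w - 1) ≤ x ^ (k : ℕ) := pow_le_pow_of_le_one hx0 (le_of_lt hx1) hk
      nlinarith [le_max_right (Z k) (0 : ℝ)]
    have h2' : (∑ k : Fin w, x ^ (w - 1) * max (Z k) 0) = x ^ (w - 1) * (-Pneg) := by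
      rw [← Finset.mul_sum, hpos]
    rw [hsplit]
    rw [hneg] at h1
    rw [h2'] at h2
    linarith
  refine ⟨?_, ?_, ?_⟩
  · rw [htsum]
    have hinv : (0 : ℝ) < (1 - x ^ w)⁻¹ := inv_pos.mpr hxw0
    have : S * (1 - x ^ w)⁻¹ ≥ (Pneg + (-Pneg) * x ^ (w - 1)) * (1 - x ^ w)⁻¹ := by
      exact mul_le_mul_of_nonneg_right hSlb (le_of_lt hinv)
    calc δ * ((1 - x ^ w)⁻¹ * S) = δ * (S * (1 - x ^ w)⁻¹) := by ring
      _ ≥ δ * ((Pneg + (-Pneg) * x ^ (w - 1)) * (1 - x ^ w)⁻¹) :=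
          mul_le_mul_of_nonneg_left this (le_of_lt hδ0)
      _ = δ * (Pneg + (-Pneg) * x ^ (w - 1)) * (1 / (1 - x ^ w)) := by
          rw [one_div]; ring
  · -- part 2
    have hxx : x ^ w ≤ x ^ (w - 1) := pow_le_pow_of_le_one hx0 (le_of_lt hx1) (by omega)
    have hratio : (1 - x ^ (w - 1)) / (1 - x ^ w) ≤ 1 := by
      rw [div_le_one hxw0]; linarith
    have hratio0 : 0 ≤ (1 - x ^ (w - 1)) / (1 - x ^ w) := by
      apply div_nonneg _ (le_of_lt hxw0)
      have : x ^ (w - 1) ≤ 1 := pow_le_one₀ hx0 (le_of_lt hx1)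
      linarith
    have key : Pneg * ((1 - x ^ (w - 1)) / (1 - x ^ w)) ≥ Pneg := by
      nlinarith
    have heq : δ * (Pneg + (-Pneg) * x ^ (w - 1)) * (1 / (1 - x ^ w))
        = δ * (Pneg * ((1 - x ^ (w - 1)) / (1 - x ^ w))) := by
      ring
    rw [heq]
    exact mul_le_mul_of_nonneg_left key (le_of_lt hδ0)
  · -- part 3
    have hPlb : -(r * w) ≤ Pneg := by
      have := abs_le.mp hPr; linarith [this.1]
    have hrw : (0 : ℝ) < r * w := by
      have : (1 : ℝ) ≤ (w : ℝ) := by exact_mod_cast hw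
      nlinarith
    have h1 : δ * (r * w * q) ≤ 1 := by
      rw [le_div_iff₀ (by positivity)] at hδq
      linarith
    have h2 : δ * (r * w) ≤ 1 / q := by
      rw [le_div_iff₀ hq]
      linarith
    have h3 : δ * -(r * (w : ℝ)) = -(δ * (r * w)) := by ring
    linarith [mul_le_mul_of_nonneg_left hPlb (le_of_lt hδ0), h2, h3]
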